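/- For the scalar system ẋ = −x with flow φ(t,x) = x e^{−t}, define r(x) = δ·log 2 / |log|x|| for x ≠ 0 and r(0) = 0, with fixed δ > 0. Then r is continuous on (−1/2, 1/2), satisfies |r(x)| ≤ δ on (−1/2, 1/2), but for every x ∈ (−1/2, 1/2) with x ≠ 0 the improper integral ∫₀^∞ r(φ(t,x)) dt diverges to +∞. -/

import Mathlib

open MeasureTheory

section Aux
open Set Filter

private lemma div_lintegral_top (k c : ℝ) (hk : 0 < k) (hc : 0 < c) :
    ∫⁻ t in Set.Ioi (0:ℝ), ENNReal.ofReal (k / (t + c)) = ⊤ := by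
  by_contra h
  have hmeas : Measurable fun t : ℝ => k / (t + c) := by
    simpa [div_eq_mul_inv] using ((measurable_id.add_const c).inv.const_mul k)
  have hnn : 0 ≤ᵐ[volume.restrict (Ioi (0:ℝ))] fun t => k / (t + c) :=
    ae_restrict_of_forall_mem measurableSet_Ioi fun t ht =>
      div_nonneg hk.le (by linarith [mem_Ioi.mp ht])
  have hint : IntegrableOn (fun t => k / (t + c)) (Ioi (0:ℝ)) :=
    (lintegral_ofReal_ne_top_iff_integrable hmeas.aestronglyMeasurable hnn).mp h
  have hint2 : IntegrableOn (fun t => k / (t + c)) (Ioi c) :=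
    hint.mono_set (Ioi_subset_Ioi hc.le)
  have hg : IntegrableOn (fun t : ℝ => k / (2 * t)) (Ioi c) := by
    refine Integrable.mono hint2 ?_ ?_
    · exact (by simpa [div_eq_mul_inv] using
        ((measurable_id.const_mul 2).inv.const_mul k) :
        Measurable fun t : ℝ => k / (2 * t)).aestronglyMeasurable
    · refine ae_restrict_of_forall_mem measurableSet_Ioi fun t ht => ?_
      have htc : c < t := mem_Ioi.mp ht
      have ht0 : 0 < t := hc.trans htc
      rw [Real.norm_eq_abs, Real.norm_eq_abs,
        abs_of_nonneg (div_nonneg hk.le (by linarith)),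
        abs_of_nonneg (div_nonneg hk.le (by linarith))]
      exact div_le_div_of_nonneg_left hk.le (by linarith) (by linarith)
  have hinv : IntegrableOn (fun t : ℝ => t⁻¹) (Ioi c) := by
    have h2 : IntegrableOn (fun t : ℝ => (2 / k) * (k / (2 * t))) (Ioi c) :=
      hg.const_mul (2 / k)
    refine IntegrableOn.congr_fun h2 (fun t ht => ?_) measurableSet_Ioi
    have ht0 : t ≠ 0 := (hc.trans (mem_Ioi.mp ht)).ne'
    field_simp
  exact not_IntegrableOn_Ioi_inv hinv

end Aux

/-- A continuous residual with `r 0 = 0` and `|r| ≤ δ` on `(-1/2, 1/2)` whose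
integral along every nontrivial trajectory of `ẋ = -x` diverges to `+∞`. -/
theorem bounded_residual_divergent_integral (δ : ℝ) (hδ : 0 < δ)
    (r : ℝ → ℝ)
    (hr : ∀ x : ℝ, r x = if x = 0 then 0 else δ * Real.log 2 / abs (Real.log (abs x))) :
    ContinuousOn r (Set.Ioo (-(1/2) : ℝ) (1/2)) ∧
    (∀ x ∈ Set.Ioo (-(1/2) : ℝ) (1/2), |r x| ≤ δ) ∧
    (∀ x ∈ Set.Ioo (-(1/2) : ℝ) (1/2), x ≠ 0 →
      ∫⁻ t in Set.Ioi (0:ℝ), ENNReal.ofReal (r (x * Real.exp (-t))) = ⊤) := by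
  have hlog2 : (0:ℝ) < Real.log 2 := Real.log_pos one_lt_two
  have hk : 0 < δ * Real.log 2 := mul_pos hδ hlog2
  -- r equals the closed formula everywhere
  have hreq : r = fun x => δ * Real.log 2 / abs (Real.log (abs x)) := by
    funext x
    rw [hr x]
    by_cases hx : x = 0
    · simp [hx, Real.log_zero]
    · simp [hx]
  -- key facts for nonzero small x
  have hsmall : ∀ x : ℝ, x ∈ Set.Ioo (-(1/2) : ℝ) (1/2) → x ≠ 0 →
      Real.log |x| < -Real.log 2 := by
    intro x hx hx0
    have h1 : |x| < 1/2 := abs_lt.mpr ⟨hx.1, hx.2⟩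
    have h2 : (0:ℝ) < |x| := abs_pos.mpr hx0
    calc Real.log |x| < Real.log (1/2) := Real.log_lt_log h2 h1
    _ = -Real.log 2 := by rw [one_div, Real.log_inv]
  refine ⟨?_, ?_, ?_⟩
  · -- continuity
    intro x hx
    by_cases hx0 : x = 0
    · subst hx0
      rw [hreq]
      apply ContinuousWithinAt.mono (t := Set.Ioo (-(1/2):ℝ) (1/2)) ?_ (fun y hy => hy)
      unfold ContinuousWithinAt
      apply Filter.Tendsto.mono_left ?_ nhdsWithin_le_nhds
      have h0 : abs (Real.log (abs (0:ℝ))) = 0 := by simp [Real.log_zero]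
      have hval : (fun x : ℝ => δ * Real.log 2 / abs (Real.log (abs x))) 0 = 0 := by
        simp [Real.log_zero]
      rw [hval]
      have habs : Filter.Tendsto (fun y : ℝ => abs (Real.log (abs y))) (nhdsWithin 0 {0}ᶜ)
          Filter.atTop := by
        simpa [Function.comp_def, Real.log_abs] using
          Filter.Tendsto.comp Filter.tendsto_abs_atBot_atTop Real.tendsto_log_nhdsNE_zero
      have h1 : Filter.Tendsto (fun y : ℝ => δ * Real.log 2 / abs (Real.log (abs y)))
          (nhdsWithin 0 {0}ᶜ) (nhds 0) :=
        Filter.Tendsto.div_atTop (tendsto_const_nhds (x := δ * Real.log 2)) habs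
      have h2 : Filter.Tendsto (fun y : ℝ => δ * Real.log 2 / abs (Real.log (abs y)))
          (pure (0:ℝ)) (nhds 0) := by
        simpa [h0] using tendsto_pure_nhds
          (fun y : ℝ => δ * Real.log 2 / abs (Real.log (abs y))) 0
      have h3 := Filter.Tendsto.sup h1 h2
      rwa [nhdsNE_sup_pure] at h3
    · have hx1 : |x| ≠ 1 := by
        have : |x| < 1/2 := abs_lt.mpr ⟨hx.1, hx.2⟩
        intro h; rw [h] at this; linarith
      have hd : abs (Real.log (abs x)) ≠ 0 := by
        intro h
        have := abs_eq_zero.mp h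
        have h2 : (0:ℝ) < |x| := abs_pos.mpr hx0
        rcases Real.log_eq_zero.mp this with h' | h' | h'
        · exact h2.ne' h'
        · exact hx1 h'
        · have : |x| ≥ 0 := abs_nonneg x
          linarith
      rw [hreq]
      apply ContinuousAt.continuousWithinAt
      exact continuousAt_const.div
        (((Real.continuousAt_log (abs_ne_zero.mpr hx0)).comp
          continuous_abs.continuousAt).abs) hd
  · -- bound
    intro x hx
    rw [hr x]
    by_cases hx0 : x = 0
    · simp [hx0, hδ.le]
    · rw [if_neg hx0]
      have hlt := hsmall x hx hx0
      have hD : Real.log 2 ≤ abs (Real.log (abs x)) := by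
        rw [abs_of_neg (by linarith)]; linarith
      have hDpos : 0 < abs (Real.log (abs x)) := lt_of_lt_of_le hlog2 hD
      rw [abs_of_nonneg (div_nonneg hk.le hDpos.le), div_le_iff₀ hDpos]
      calc δ * Real.log 2 ≤ δ * abs (Real.log (abs x)) := by
            exact mul_le_mul_of_nonneg_left hD hδ.le
      _ = δ * abs (Real.log (abs x)) := rfl
  · -- divergence
    intro x hx hx0
    have hlt := hsmall x hx hx0
    set c : ℝ := -Real.log |x| with hc
    have hcpos : 0 < c := by simp only [hc]; linarith
    have : ∫⁻ t in Set.Ioi (0:ℝ), ENNReal.ofReal (r (x * Real.exp (-t)))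
        = ∫⁻ t in Set.Ioi (0:ℝ), ENNReal.ofReal (δ * Real.log 2 / (t + c)) := by
      apply setLIntegral_congr_fun measurableSet_Ioi
      intro t ht
      have ht0 : 0 < t := ht
      have hne : x * Real.exp (-t) ≠ 0 :=
        mul_ne_zero hx0 (Real.exp_ne_zero _)
      beta_reduce
      rw [hr _, if_neg hne]
      congr 1
      have habs : |x * Real.exp (-t)| = |x| * Real.exp (-t) := by
        rw [abs_mul, abs_of_pos (Real.exp_pos _)]
      rw [habs, Real.log_mul (abs_ne_zero.mpr hx0) (Real.exp_ne_zero _),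
        Real.log_exp]
      rw [abs_of_neg (by linarith)]
      ring_nf
      rw [hc]; ring
    rw [this]
    exact div_lintegral_top _ _ hk hcpos
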